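/- arXiv:2503.04561 — 2 statements merged into one kernel-verified Lean document; each statement's English description precedes it below -/
import Mathlib

section
/- For every even integer m ≥ 2, gcd(2(m⁴ - 1), m⁴ - 1 - 4m²) = 1. -/
/-- For every even integer m ≥ 2, gcd(2(m⁴ - 1), m⁴ - 1 - 4m²) = 1. -/
theorem stmt5 (m : ℤ) (hm : 2 ≤ m) (hme : Even m) :
    Int.gcd (2 * (m ^ 4 - 1)) (m ^ 4 - 1 - 4 * m ^ 2) = 1 := by
  rw [← Int.isCoprime_iff_gcd_eq_one]
  obtain ⟨k, hk⟩ := hme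
  have h2b : IsCoprime (2 : ℤ) (m ^ 4 - 1 - 4 * m ^ 2) := by
    refine ⟨-(8 * k ^ 4 - 8 * k ^ 2 - 1), 1, ?_⟩
    subst hk; ring
  have ham : IsCoprime (m ^ 4 - 1) m := ⟨-1, m ^ 3, by ring⟩
  have ha4 : IsCoprime (m ^ 4 - 1) (2 : ℤ) := by
    refine ⟨1, -(8 * k ^ 4 - 1), ?_⟩
    subst hk; ring
  have hab : IsCoprime (m ^ 4 - 1) (m ^ 4 - 1 - 4 * m ^ 2) := by
    have : IsCoprime (m ^ 4 - 1) (4 * m ^ 2) := by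
      have h4 : IsCoprime (m ^ 4 - 1) (4 : ℤ) := by
        have := ha4.mul_right ha4
        simpa [show (2 : ℤ) * 2 = 4 by norm_num] using this
      have hm2 : IsCoprime (m ^ 4 - 1) (m ^ 2) := by
        simpa [sq] using ham.mul_right ham
      exact h4.mul_right hm2
    have h := this.add_mul_left_right (-1)
    have : IsCoprime (m ^ 4 - 1) (4 * m ^ 2 + (m ^ 4 - 1) * -1) := h
    have := this.neg_right
    convert this using 1
    · rfl
    ring
  exact h2b.mul_left hab
end

section
/- Let m ≥ 4 be an even integer with m - 1 and m + 1 prime, and let E_m be the elliptic curve over ℚ defined by y² = (x - (m⁴-1))(x + (m⁴-1))(x - 4m²). Then the torsion subgroup of E_m(ℚ) is isomorphic to ℤ/2ℤ × ℤ/2ℤ. -/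
/-- The elliptic curve y² = (x - (m⁴-1))(x + (m⁴-1))(x - 4m²) over ℚ, in
Weierstrass form y² = x³ - 4m²x² - (m⁴-1)²x + 4m²(m⁴-1)². -/
def Wm (m : ℤ) : WeierstrassCurve.Affine ℚ :=
  { a₁ := 0, a₂ := -(4 * (m : ℚ) ^ 2), a₃ := 0, a₄ := -((m : ℚ) ^ 4 - 1) ^ 2,
    a₆ := 4 * (m : ℚ) ^ 2 * ((m : ℚ) ^ 4 - 1) ^ 2 }

namespace WmAux

open WeierstrassCurve WeierstrassCurve.Affine WeierstrassCurve.Affine.Point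

noncomputable def e1 (m : ℤ) : ℚ := (m : ℚ) ^ 4 - 1
noncomputable def e2 (m : ℤ) : ℚ := -((m : ℚ) ^ 4 - 1)
noncomputable def e3 (m : ℤ) : ℚ := 4 * (m : ℚ) ^ 2

variable {m : ℤ}

lemma hm4 (hm : 4 ≤ m) : (4 : ℚ) ≤ (m : ℚ) := by exact_mod_cast hm

lemma hm2 (hm : 4 ≤ m) : (16 : ℚ) ≤ (m : ℚ) ^ 2 := by
  have := hm4 hm; nlinarith

lemma e1_pos (hm : 4 ≤ m) : 0 < e1 m := by
  have := hm2 hm; unfold e1; nlinarith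

lemma e1_sub_e2 : e1 m - e2 m = 2 * ((m : ℚ) ^ 4 - 1) := by unfold e1 e2; ring

lemma e3_sub_e1_neg (hm : 4 ≤ m) : e3 m - e1 m < 0 := by
  have := hm2 hm; unfold e1 e3; nlinarith [sq_nonneg ((m:ℚ)^2 - 16)]

lemma e2_sub_e1_neg (hm : 4 ≤ m) : e2 m - e1 m < 0 := by
  have := e1_pos hm; unfold e1 e2 at *; nlinarith

lemma e1_ne_e2 (hm : 4 ≤ m) : e1 m ≠ e2 m := by
  have := e2_sub_e1_neg hm; intro h; rw [h] at this; simp at this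

lemma e1_ne_e3 (hm : 4 ≤ m) : e1 m ≠ e3 m := by
  have := e3_sub_e1_neg hm; intro h; rw [h] at this; simp at this

lemma e2_ne_e3 (hm : 4 ≤ m) : e2 m ≠ e3 m := by
  have h1 := e1_pos hm
  have h4 := hm4 hm
  unfold e1 e2 e3 at *; nlinarith

lemma Wm_a₁ : (Wm m).a₁ = 0 := rfl
lemma Wm_a₂ : (Wm m).a₂ = -(4 * (m : ℚ) ^ 2) := rfl
lemma Wm_a₃ : (Wm m).a₃ = 0 := rfl
lemma Wm_a₄ : (Wm m).a₄ = -((m : ℚ) ^ 4 - 1) ^ 2 := rfl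
lemma Wm_a₆ : (Wm m).a₆ = 4 * (m : ℚ) ^ 2 * ((m : ℚ) ^ 4 - 1) ^ 2 := rfl

lemma equation_iff_Wm {x y : ℚ} :
    (Wm m).Equation x y ↔ y ^ 2 = (x - e1 m) * (x - e2 m) * (x - e3 m) := by
  rw [WeierstrassCurve.Affine.equation_iff, Wm_a₁, Wm_a₂, Wm_a₃, Wm_a₄, Wm_a₆]
  unfold e1 e2 e3
  constructor <;> intro h <;> linear_combination h

lemma negY_Wm {x y : ℚ} : (Wm m).negY x y = -y := by
  rw [WeierstrassCurve.Affine.negY, Wm_a₁, Wm_a₃]; ring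

lemma nonsingular_root (hm : 4 ≤ m) {e : ℚ} (he : (Wm m).Equation e 0)
    (hd : 3 * e ^ 2 + 2 * (Wm m).a₂ * e + (Wm m).a₄ ≠ 0) : (Wm m).Nonsingular e 0 := by
  rw [WeierstrassCurve.Affine.nonsingular_iff]
  exact ⟨he, Or.inl (by rw [Wm_a₁]; simpa using hd.symm)⟩

lemma eqn_e1 (hm : 4 ≤ m) : (Wm m).Equation (e1 m) 0 := by
  rw [equation_iff_Wm]; unfold e1 e2 e3; ring

lemma eqn_e2 (hm : 4 ≤ m) : (Wm m).Equation (e2 m) 0 := by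
  rw [equation_iff_Wm]; unfold e1 e2 e3; ring

lemma eqn_e3 (hm : 4 ≤ m) : (Wm m).Equation (e3 m) 0 := by
  rw [equation_iff_Wm]; unfold e1 e2 e3; ring

lemma ns_e1 (hm : 4 ≤ m) : (Wm m).Nonsingular (e1 m) 0 := by
  refine nonsingular_root hm (eqn_e1 hm) ?_
  have h : 3 * e1 m ^ 2 + 2 * (Wm m).a₂ * e1 m + (Wm m).a₄
      = (e1 m - e2 m) * (e1 m - e3 m) := by
    rw [Wm_a₂, Wm_a₄]; unfold e1 e2 e3; ring
  rw [h]
  have h1 := sub_ne_zero_of_ne (e1_ne_e2 hm)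
  have h2 := sub_ne_zero_of_ne (e1_ne_e3 hm)
  exact mul_ne_zero h1 h2

lemma ns_e2 (hm : 4 ≤ m) : (Wm m).Nonsingular (e2 m) 0 := by
  refine nonsingular_root hm (eqn_e2 hm) ?_
  have h : 3 * e2 m ^ 2 + 2 * (Wm m).a₂ * e2 m + (Wm m).a₄
      = (e2 m - e1 m) * (e2 m - e3 m) := by
    rw [Wm_a₂, Wm_a₄]; unfold e1 e2 e3; ring
  rw [h]
  exact mul_ne_zero (sub_ne_zero_of_ne (e1_ne_e2 hm).symm)
    (sub_ne_zero_of_ne (e2_ne_e3 hm))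

lemma ns_e3 (hm : 4 ≤ m) : (Wm m).Nonsingular (e3 m) 0 := by
  refine nonsingular_root hm (eqn_e3 hm) ?_
  have h : 3 * e3 m ^ 2 + 2 * (Wm m).a₂ * e3 m + (Wm m).a₄
      = (e3 m - e1 m) * (e3 m - e2 m) := by
    rw [Wm_a₂, Wm_a₄]; unfold e1 e2 e3; ring
  rw [h]
  exact mul_ne_zero (sub_ne_zero_of_ne (e1_ne_e3 hm).symm)
    (sub_ne_zero_of_ne (e2_ne_e3 hm).symm)


local notation "v" => padicValRat 2



lemma v_int_nonneg (k : ℤ) : 0 ≤ v (k : ℚ) := by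
  rw [padicValRat.of_int]; exact_mod_cast Int.ofNat_nonneg _

lemma v_odd_int {k : ℤ} (hk : Odd k) : v (k : ℚ) = 0 := by
  rw [padicValRat.of_int, padicValInt.eq_zero_of_not_dvd]
  · rfl
  · have h2 : ((2:ℕ):ℤ) = 2 := by norm_num
    rw [h2, Int.two_dvd_ne_zero]
    obtain ⟨t, rfl⟩ := hk
    omega

lemma v_sq {q : ℚ} (hq : q ≠ 0) : v (q ^ 2) = 2 * v q := by
  rw [padicValRat.pow q]; norm_num

lemma v_sq_even {q : ℚ} (hq : q ≠ 0) : Even (v (q ^ 2)) := by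
  rw [v_sq hq]; exact even_two_mul _

lemma v_two : v (2 : ℚ) = 1 := by
  simpa using padicValRat.self (p := 2) one_lt_two

lemma v_neg (q : ℚ) : v (-q) = v q := padicValRat.neg q

/-- If valuations differ strictly, the sum is nonzero with the smaller valuation. -/
lemma v_add_eq {q r : ℚ} (hq : q ≠ 0) (hr : r ≠ 0) (h : v q < v r) :
    q + r ≠ 0 ∧ v (q + r) = v q := by
  have hne : q + r ≠ 0 := by
    intro h0
    have : r = -q := by linarith [eq_neg_of_add_eq_zero_right h0]
    rw [this, v_neg] at h
    exact lt_irrefl _ h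
  exact ⟨hne, padicValRat.add_eq_of_lt hne hq hr h⟩

lemma v_sub_eq {q r : ℚ} (hq : q ≠ 0) (hr : r ≠ 0) (h : v q < v r) :
    q - r ≠ 0 ∧ v (q - r) = v q := by
  have hr' : -r ≠ 0 := neg_ne_zero.mpr hr
  have := v_add_eq hq hr' (by rwa [v_neg])
  simpa [sub_eq_add_neg] using this

lemma num_den_odd {q : ℚ} (hq : q ≠ 0) (hq0 : v q = 0) :
    Odd q.num ∧ Odd (q.den : ℤ) := by
  have hn : q.num ≠ 0 := Rat.num_ne_zero.mpr hq
  have hd : q.den ≠ 0 := q.den_nz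
  rw [padicValRat_def] at hq0
  have h2 : ((2:ℕ):ℤ) = 2 := by norm_num
  rcases Int.even_or_odd q.num with he | ho
  · exfalso
    have hdo : ¬ (2 ∣ q.den) := by
      intro hdvd
      have hg : (2 : ℕ) ∣ Nat.gcd q.num.natAbs q.den := by
        refine Nat.dvd_gcd ?_ hdvd
        have : (2:ℤ) ∣ q.num := he.two_dvd
        omega
      rw [q.reduced] at hg
      omega
    have h1 : 1 ≤ padicValInt 2 q.num := by
      have hdvd : ((2:ℕ):ℤ) ^ 1 ∣ q.num := by
        rw [h2, pow_one]; exact he.two_dvd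
      rcases (padicValInt_dvd_iff 1 q.num).mp hdvd with h | h
      · exact absurd h hn
      · exact h
    have h0 : padicValNat 2 q.den = 0 := padicValNat.eq_zero_of_not_dvd hdo
    omega
  · refine ⟨ho, ?_⟩
    rcases Nat.even_or_odd q.den with hde | hdo
    · exfalso
      have h1 : padicValInt 2 q.num = 0 := by
        apply padicValInt.eq_zero_of_not_dvd
        rw [h2, Int.two_dvd_ne_zero]
        obtain ⟨t, ht⟩ := ho; omega
      have h2' : 1 ≤ padicValNat 2 q.den :=
        one_le_padicValNat_of_dvd hd hde.two_dvd
      omega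
    · exact_mod_cast hdo

/-- odd square is 1 mod 8, 2-adically -/
lemma v_sq_sub_one {q : ℚ} (hq : q ≠ 0) (hq0 : v q = 0) (hq1 : q ^ 2 ≠ 1) :
    3 ≤ v (q ^ 2 - 1) := by
  obtain ⟨hn, hd⟩ := num_den_odd hq hq0
  have hdQ : ((q.den : ℤ) : ℚ) ≠ 0 := by
    rw [Int.cast_ne_zero]
    exact_mod_cast q.den_nz
  have hnum : (q.num : ℚ) = q * ((q.den : ℤ) : ℚ) := by
    push_cast
    rw [Rat.mul_den_eq_num]
  have h' : (q.num : ℚ) ^ 2 = q ^ 2 * ((q.den : ℤ) : ℚ) ^ 2 := by rw [hnum]; ring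
  have h8 : (8:ℤ) ∣ q.num ^ 2 - (q.den : ℤ) ^ 2 := by
    obtain ⟨a, ha⟩ := hn
    obtain ⟨b, hb⟩ := hd
    obtain ⟨s, hs⟩ : Even (a * (a + 1)) := Int.even_mul_succ_self a
    obtain ⟨t, ht⟩ : Even (b * (b + 1)) := Int.even_mul_succ_self b
    refine ⟨s - t, ?_⟩
    rw [ha, hb]
    linear_combination 4 * hs - 4 * ht
  obtain ⟨c, hc⟩ := h8
  have hcQ : (q.num : ℚ) ^ 2 - ((q.den : ℤ) : ℚ) ^ 2 = 8 * (c : ℚ) := by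
    exact_mod_cast congrArg (fun z : ℤ => (z : ℚ)) hc
  have hkey : q ^ 2 - 1 = ((8 * c : ℤ) : ℚ) / (((q.den : ℤ) : ℚ) ^ 2) := by
    rw [eq_div_iff (pow_ne_zero 2 hdQ)]
    push_cast
    linear_combination hcQ - h'
  have hc0 : c ≠ 0 := by
    intro h0
    apply hq1
    have h1 : q ^ 2 - 1 = 0 := by rw [hkey, h0]; simp
    linarith [h1]
  have hden_odd : Odd ((q.den : ℤ) ^ 2) := hd.pow
  rw [hkey, padicValRat.div (by exact_mod_cast mul_ne_zero (by norm_num) hc0)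
      (pow_ne_zero 2 hdQ)]
  have hv8c : v ((8 * c : ℤ) : ℚ) = 3 + v (c : ℚ) := by
    push_cast
    rw [padicValRat.mul (by norm_num) (by exact_mod_cast hc0)]
    have h83 : ((8:ℚ)) = 2 ^ 3 := by norm_num
    rw [h83, padicValRat.pow _, v_two]
    ring
  have hvden : v (((q.den : ℤ) : ℚ) ^ 2) = 0 := by
    have hcast : (((q.den : ℤ) : ℚ) ^ 2) = (((q.den : ℤ) ^ 2 : ℤ) : ℚ) := by push_cast; ring
    rw [hcast, v_odd_int hden_odd]
  rw [hvden, hv8c]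
  have := v_int_nonneg c
  linarith

/-- difference of two 2-integral rational squares never has valuation 1 -/
lemma v_sq_sub_sq {a b : ℚ} (ha : a ≠ 0) (hb : b ≠ 0) (hne : b ^ 2 - a ^ 2 ≠ 0)
    (hva : 0 ≤ v (a ^ 2)) (hvb : 0 ≤ v (b ^ 2)) : v (b ^ 2 - a ^ 2) ≠ 1 := by
  have ha2 : a ^ 2 ≠ 0 := pow_ne_zero 2 ha
  have hb2 : b ^ 2 ≠ 0 := pow_ne_zero 2 hb
  rcases eq_or_ne (v (b ^ 2)) (v (a ^ 2)) with hEq | hNe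
  · rcases eq_or_lt_of_le hva with h0 | hpos
    · -- both valuations zero
      have hq : v (b / a) = 0 := by
        rw [padicValRat.div hb ha]
        have h1 := v_sq ha
        have h2 := v_sq hb
        omega
      have hqne : (b / a) ^ 2 ≠ 1 := by
        intro h1
        apply hne
        field_simp at h1
        linear_combination h1
      have h3 := v_sq_sub_one (div_ne_zero hb ha) hq hqne
      have hfact : b ^ 2 - a ^ 2 = a ^ 2 * ((b / a) ^ 2 - 1) := by
        field_simp
      have hfne : (b / a) ^ 2 - 1 ≠ 0 := by
        intro h0'
        apply hne
        rw [hfact, h0', mul_zero]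
      rw [hfact, padicValRat.mul ha2 hfne]
      omega
    · -- common valuation positive hence ≥ 2 by evenness
      have hea := v_sq_even ha
      have h2 : 2 ≤ v (a ^ 2) := by
        rcases hea with ⟨t, ht⟩
        omega
      have hmin := padicValRat.min_le_padicValRat_add (p := 2)
        (q := b ^ 2) (r := -(a ^ 2)) (by rwa [← sub_eq_add_neg])
      rw [v_neg] at hmin
      rw [← sub_eq_add_neg] at hmin
      intro h1
      rw [h1, hEq] at hmin
      omega
  · have hmm := padicValRat.add_eq_min (p := 2) (q := b ^ 2) (r := -(a ^ 2))
      (by rwa [← sub_eq_add_neg]) hb2 (neg_ne_zero.mpr ha2)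
      (by rwa [v_neg, ne_eq])
    rw [← sub_eq_add_neg, v_neg] at hmm
    intro h1
    rcases v_sq_even ha with ⟨s, hs⟩
    rcases v_sq_even hb with ⟨t, ht⟩
    rw [h1] at hmm
    omega


section Curve
variable {m : ℤ}

lemma y_ne_negY_Wm {x y : ℚ} (hy : y ≠ 0) : y ≠ (Wm m).negY x y := by
  rw [negY_Wm]; intro h; apply hy; linarith

lemma slope_self_eq {x y : ℚ} (hy : y ≠ 0) :
    (Wm m).slope x x y y = (3 * x ^ 2 + 2 * (Wm m).a₂ * x + (Wm m).a₄) / (2 * y) := by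
  rw [WeierstrassCurve.Affine.slope_of_Y_ne rfl (y_ne_negY_Wm hy)]
  rw [negY_Wm, Wm_a₁]
  congr 1 <;> ring

lemma addX_self_eq {x y : ℚ} (hy : y ≠ 0) :
    (Wm m).addX x x ((Wm m).slope x x y y)
      = ((3 * x ^ 2 + 2 * (Wm m).a₂ * x + (Wm m).a₄) / (2 * y)) ^ 2 - (Wm m).a₂ - 2 * x := by
  rw [WeierstrassCurve.Affine.addX, slope_self_eq hy, Wm_a₁]
  ring

/-- the generic square identity for doubling on y² = (x-ei)(x-ej)(x-ek) -/
lemma sq_helper {x y ei ej ek A2 A4 : ℚ} (hy : y ≠ 0)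
    (ha2 : A2 = -(ei + ej + ek)) (ha4 : A4 = ei * ej + ei * ek + ej * ek)
    (heq : y ^ 2 = (x - ei) * (x - ej) * (x - ek)) :
    ((3 * x ^ 2 + 2 * A2 * x + A4) / (2 * y)) ^ 2 - A2 - 2 * x - ei
      = (((x - ei) ^ 2 - (ej - ei) * (ek - ei)) / (2 * y)) ^ 2 := by
  have h2y : (2 * y) ≠ 0 := mul_ne_zero two_ne_zero hy
  have key : (3 * x ^ 2 + 2 * A2 * x + A4) ^ 2 - (A2 + 2 * x + ei) * (2 * y) ^ 2
      = ((x - ei) ^ 2 - (ej - ei) * (ek - ei)) ^ 2 := by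
    subst ha2 ha4
    linear_combination (-4 * (-(ei + ej + ek) + 2 * x + ei)) * heq
  calc ((3 * x ^ 2 + 2 * A2 * x + A4) / (2 * y)) ^ 2 - A2 - 2 * x - ei
      = ((3 * x ^ 2 + 2 * A2 * x + A4) ^ 2 - (A2 + 2 * x + ei) * (2 * y) ^ 2) / (2 * y) ^ 2 := by
        field_simp
        ring
    _ = (((x - ei) ^ 2 - (ej - ei) * (ek - ei)) ^ 2) / (2 * y) ^ 2 := by rw [key]
    _ = (((x - ei) ^ 2 - (ej - ei) * (ek - ei)) / (2 * y)) ^ 2 := by rw [div_pow]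

end Curve

section Val
variable {m : ℤ}

lemma odd_m4_sub_one (hme : Even m) : Odd (m ^ 4 - 1) := by
  obtain ⟨k, rfl⟩ := hme
  exact ⟨8 * k ^ 4 - 1, by ring⟩

lemma m4_sub_one_ne (hm : 4 ≤ m) : ((m : ℚ) ^ 4 - 1) ≠ 0 := ne_of_gt (e1_pos hm)

lemma v_m4_sub_one (hme : Even m) : v ((m : ℚ) ^ 4 - 1) = 0 := by
  have hcast : ((m : ℚ) ^ 4 - 1) = ((m ^ 4 - 1 : ℤ) : ℚ) := by push_cast; ring
  rw [hcast, v_odd_int (odd_m4_sub_one hme)]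

lemma v_e1e2 (hme : Even m) (hm : 4 ≤ m) : v (e1 m - e2 m) = 1 := by
  rw [e1_sub_e2, padicValRat.mul two_ne_zero (m4_sub_one_ne hm), v_two,
    v_m4_sub_one hme]
  norm_num

lemma v_e1 (hme : Even m) : v (e1 m) = 0 := v_m4_sub_one hme

lemma v_e2 (hme : Even m) : v (e2 m) = 0 := by
  rw [e2, v_neg]; exact v_m4_sub_one hme

lemma v_16k2 {k : ℤ} (hk : k ≠ 0) : 4 ≤ v ((16 : ℚ) * (k : ℚ) ^ 2) := by
  have hkQ : (k : ℚ) ≠ 0 := Int.cast_ne_zero.mpr hk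
  rw [padicValRat.mul (by norm_num) (pow_ne_zero 2 hkQ)]
  have h16 : ((16 : ℚ)) = 2 ^ 4 := by norm_num
  rw [h16, padicValRat.pow _, v_two, v_sq hkQ]
  have := v_int_nonneg k
  push_cast
  linarith

lemma a2_ne (hm : 4 ≤ m) : (Wm m).a₂ ≠ 0 := by
  rw [Wm_a₂]
  have := hm2 hm
  intro h; nlinarith

lemma a4_ne (hm : 4 ≤ m) : (Wm m).a₄ ≠ 0 := by
  rw [Wm_a₄]
  have := m4_sub_one_ne hm
  intro h
  apply this
  nlinarith [sq_nonneg ((m:ℚ)^4 - 1)]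

lemma a6_ne (hm : 4 ≤ m) : (Wm m).a₆ ≠ 0 := by
  rw [Wm_a₆]
  have h1 := m4_sub_one_ne hm
  have h2 := hm2 hm
  intro h
  have hq : (m : ℚ) ≠ 0 := by intro h0; rw [h0] at h2; norm_num at h2
  exact (mul_ne_zero (mul_ne_zero (by norm_num) (pow_ne_zero 2 hq)) (pow_ne_zero 2 h1)) h

lemma v_a2 (hme : Even m) (hm : 4 ≤ m) : 4 ≤ v ((Wm m).a₂) := by
  obtain ⟨k, hk⟩ := hme
  have hk0 : k ≠ 0 := by omega
  have hcast : (Wm m).a₂ = -(16 * (k : ℚ) ^ 2) := by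
    rw [Wm_a₂, hk]; push_cast; ring
  rw [hcast, v_neg]
  exact v_16k2 hk0

lemma v_a4 (hme : Even m) (hm : 4 ≤ m) : v ((Wm m).a₄) = 0 := by
  have hcast : (Wm m).a₄ = ((-(m ^ 4 - 1) ^ 2 : ℤ) : ℚ) := by
    rw [Wm_a₄]; push_cast; ring
  rw [hcast, v_odd_int ((odd_m4_sub_one hme).pow.neg)]

lemma v_a6 (hme : Even m) (hm : 4 ≤ m) : 4 ≤ v ((Wm m).a₆) := by
  obtain ⟨k, hk⟩ := hme
  have hk0 : k ≠ 0 := by omega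
  have hme' : Even m := ⟨k, hk⟩
  have hcast : (Wm m).a₆ = (16 * (k : ℚ) ^ 2) * ((m : ℚ) ^ 4 - 1) ^ 2 := by
    rw [Wm_a₆, hk]; push_cast; ring
  have h1 : ((m : ℚ) ^ 4 - 1) ^ 2 ≠ 0 := pow_ne_zero 2 (m4_sub_one_ne hm)
  have h2 : (16 : ℚ) * (k : ℚ) ^ 2 ≠ 0 := by
    have : (k:ℚ) ≠ 0 := Int.cast_ne_zero.mpr hk0
    positivity
  rw [hcast, padicValRat.mul h2 h1]
  have h3 : v (((m : ℚ) ^ 4 - 1) ^ 2) = 0 := by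
    rw [v_sq (m4_sub_one_ne hm), v_m4_sub_one hme']
    norm_num
  rw [h3]
  have := v_16k2 hk0
  linarith

lemma equation_cubic {x y : ℚ} (heq : (Wm m).Equation x y) :
    y ^ 2 = x ^ 3 + (Wm m).a₂ * x ^ 2 + (Wm m).a₄ * x + (Wm m).a₆ := by
  rw [WeierstrassCurve.Affine.equation_iff, Wm_a₁, Wm_a₃] at heq
  linear_combination heq

/-- valuation of y when v x < 0 -/
lemma v_y_of_neg (hme : Even m) (hm : 4 ≤ m) {x y : ℚ} (heq : (Wm m).Equation x y)
    (hv : v x < 0) : x ≠ 0 ∧ y ≠ 0 ∧ 2 * v y = 3 * v x := by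
  have hx0 : x ≠ 0 := by intro h; rw [h, padicValRat.zero] at hv; omega
  have heqc := equation_cubic heq
  have hx3 : v (x ^ 3) = 3 * v x := by
    rw [padicValRat.pow x]; norm_num
  have hx3ne : x ^ 3 ≠ 0 := pow_ne_zero 3 hx0
  have hinner : (Wm m).a₄ * x + (Wm m).a₆ ≠ 0 ∧ v ((Wm m).a₄ * x + (Wm m).a₆) = v x := by
    have hax : v ((Wm m).a₄ * x) = v x := by
      rw [padicValRat.mul (a4_ne hm) hx0, v_a4 hme hm]; ring
    have := v_a6 hme hm
    have h := v_add_eq (mul_ne_zero (a4_ne hm) hx0) (a6_ne hm) (by omega)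
    rwa [hax] at h
  set rest := (Wm m).a₂ * x ^ 2 + ((Wm m).a₄ * x + (Wm m).a₆) with hrest
  have hre : y ^ 2 = x ^ 3 + rest := by rw [hrest]; linear_combination heqc
  have hy2 : y ^ 2 ≠ 0 ∧ v (y ^ 2) = 3 * v x := by
    rcases eq_or_ne rest 0 with h0 | h0
    · rw [h0, add_zero] at hre
      rw [hre]
      exact ⟨hx3ne, hx3⟩
    · have hvrest : 3 * v x < v rest := by
        have hax2 : v ((Wm m).a₂ * x ^ 2) = v ((Wm m).a₂) + 2 * v x := by
          rw [padicValRat.mul (a2_ne hm) (pow_ne_zero 2 hx0), v_sq hx0]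
        have hmin := padicValRat.min_le_padicValRat_add (p := 2)
          (q := (Wm m).a₂ * x ^ 2) (r := (Wm m).a₄ * x + (Wm m).a₆) (by rwa [← hrest])
        rw [hax2, hinner.2] at hmin
        have := v_a2 hme hm
        rw [← hrest] at hmin
        omega
      have h := v_add_eq hx3ne h0 (by omega)
      rw [hx3] at h
      rw [hre]
      exact h
  have hy0 : y ≠ 0 := fun h => hy2.1 (by rw [h]; ring)
  refine ⟨hx0, hy0, ?_⟩
  have := v_sq hy0
  omega

/-- doubling decreases the valuation of x by exactly 2 -/
lemma v_xd (hme : Even m) (hm : 4 ≤ m) {x y : ℚ} (heq : (Wm m).Equation x y)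
    (hv : v x < 0) :
    (((3 * x ^ 2 + 2 * (Wm m).a₂ * x + (Wm m).a₄) / (2 * y)) ^ 2 - (Wm m).a₂ - 2 * x) ≠ 0 ∧
    v (((3 * x ^ 2 + 2 * (Wm m).a₂ * x + (Wm m).a₄) / (2 * y)) ^ 2 - (Wm m).a₂ - 2 * x)
      = v x - 2 := by
  obtain ⟨hx0, hy0, hvy⟩ := v_y_of_neg hme hm heq hv
  have h3x2 : (3 : ℚ) * x ^ 2 ≠ 0 := by positivity
  have hv3x2 : v (3 * x ^ 2) = 2 * v x := by
    have h3 : v (3 : ℚ) = 0 := by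
      have h := v_odd_int (k := 3) ⟨1, by norm_num⟩
      norm_num at h
      exact h
    rw [padicValRat.mul (by norm_num) (pow_ne_zero 2 hx0), v_sq hx0, h3]
    ring
  -- numerator N
  have hN : (3 * x ^ 2 + 2 * (Wm m).a₂ * x + (Wm m).a₄) ≠ 0 ∧
      v (3 * x ^ 2 + 2 * (Wm m).a₂ * x + (Wm m).a₄) = 2 * v x := by
    rcases eq_or_ne (2 * (Wm m).a₂ * x + (Wm m).a₄) 0 with h0 | h0
    · have hre : 3 * x ^ 2 + 2 * (Wm m).a₂ * x + (Wm m).a₄ = 3 * x ^ 2 := by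
        linear_combination h0
      rw [hre]
      exact ⟨h3x2, hv3x2⟩
    · have hvt : 2 * v x < v (2 * (Wm m).a₂ * x + (Wm m).a₄) := by
        have h2a2x : v (2 * (Wm m).a₂ * x) = 1 + v ((Wm m).a₂) + v x := by
          rw [mul_assoc, padicValRat.mul two_ne_zero (mul_ne_zero (a2_ne hm) hx0),
            padicValRat.mul (a2_ne hm) hx0, v_two]
          ring
        have hmin := padicValRat.min_le_padicValRat_add (p := 2)
          (q := 2 * (Wm m).a₂ * x) (r := (Wm m).a₄) h0
        rw [h2a2x, v_a4 hme hm] at hmin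
        have := v_a2 hme hm
        omega
      have h := v_add_eq h3x2 h0 (by omega)
      rw [hv3x2] at h
      have hre : 3 * x ^ 2 + (2 * (Wm m).a₂ * x + (Wm m).a₄)
          = 3 * x ^ 2 + 2 * (Wm m).a₂ * x + (Wm m).a₄ := by ring
      rw [hre] at h
      exact h
  have h2y : (2 : ℚ) * y ≠ 0 := mul_ne_zero two_ne_zero hy0
  have hL : ((3 * x ^ 2 + 2 * (Wm m).a₂ * x + (Wm m).a₄) / (2 * y)) ≠ 0 :=
    div_ne_zero hN.1 h2y
  have hvL : v ((3 * x ^ 2 + 2 * (Wm m).a₂ * x + (Wm m).a₄) / (2 * y))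
      = 2 * v x - 1 - v y := by
    rw [padicValRat.div hN.1 h2y, hN.2, padicValRat.mul two_ne_zero hy0, v_two]
    ring
  have hvL2 : v (((3 * x ^ 2 + 2 * (Wm m).a₂ * x + (Wm m).a₄) / (2 * y)) ^ 2)
      = v x - 2 := by
    rw [v_sq hL, hvL]
    omega
  -- the correction term -a₂ - 2x
  have h2x : (2 : ℚ) * x ≠ 0 := mul_ne_zero two_ne_zero hx0
  have hv2x : v (2 * x) = 1 + v x := by
    rw [padicValRat.mul two_ne_zero hx0, v_two]
  have hs : (2 * x + (Wm m).a₂) ≠ 0 ∧ v (2 * x + (Wm m).a₂) = 1 + v x := by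
    have := v_a2 hme hm
    have h := v_add_eq h2x (a2_ne hm) (by omega)
    rwa [hv2x] at h
  have hfinal := v_add_eq (pow_ne_zero 2 hL) (neg_ne_zero.mpr hs.1)
    (by rw [v_neg, hvL2, hs.2]; omega)
  rw [hvL2] at hfinal
  have hre : ((3 * x ^ 2 + 2 * (Wm m).a₂ * x + (Wm m).a₄) / (2 * y)) ^ 2 +
      -(2 * x + (Wm m).a₂)
      = ((3 * x ^ 2 + 2 * (Wm m).a₂ * x + (Wm m).a₄) / (2 * y)) ^ 2 - (Wm m).a₂ - 2 * x := by
    ring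
  rw [hre] at hfinal
  exact hfinal

end Val

section Points

open WeierstrassCurve.Affine.Point

variable {m : ℤ}

noncomputable def ptx : (Wm m).Point → ℚ
  | .zero => 0
  | @WeierstrassCurve.Affine.Point.some _ _ _ x _ _ => x

@[simp] lemma ptx_some {x y : ℚ} (h : (Wm m).Nonsingular x y) :
    ptx (Point.some _ _ h) = x := rfl

lemma some_inj {x y x' y' : ℚ} {h : (Wm m).Nonsingular x y} {h' : (Wm m).Nonsingular x' y'}
    (he : Point.some _ _ h = Point.some _ _ h') : x = x' ∧ y = y' := by
  cases he
  exact ⟨rfl, rfl⟩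

lemma some_congr {x y x' y' : ℚ} (h : (Wm m).Nonsingular x y) (h' : (Wm m).Nonsingular x' y')
    (hx : x = x') (hy : y = y') : Point.some _ _ h = Point.some _ _ h' := by
  subst hx; subst hy; rfl

lemma double_point {x y : ℚ} (h : (Wm m).Nonsingular x y) (hy : y ≠ 0) :
    Point.some _ _ h + Point.some _ _ h =
      Point.some _ _ (WeierstrassCurve.Affine.nonsingular_add h h
        (fun hxy => y_ne_negY_Wm hy hxy.right)) :=
  add_self_of_Y_ne (y_ne_negY_Wm hy)

lemma double_x_eq {x y : ℚ} (h : (Wm m).Nonsingular x y) (hy : y ≠ 0)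
    {x' y' : ℚ} {h' : (Wm m).Nonsingular x' y'}
    (hdd : Point.some _ _ h + Point.some _ _ h = Point.some _ _ h') :
    x' = ((3 * x ^ 2 + 2 * (Wm m).a₂ * x + (Wm m).a₄) / (2 * y)) ^ 2
      - (Wm m).a₂ - 2 * x := by
  rw [double_point h hy] at hdd
  obtain ⟨hx, -⟩ := some_inj hdd
  rw [← hx, addX_self_eq hy]

/-- doubling a point with negative 2-adic x-valuation -/
lemma double_neg_val (hme : Even m) (hm : 4 ≤ m) (P : (Wm m).Point) (hP : P ≠ 0)
    (hv : v (ptx P) < 0) : P + P ≠ 0 ∧ v (ptx (P + P)) = v (ptx P) - 2 := by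
  rcases P with _ | @⟨x, y, h⟩
  · exact absurd rfl hP
  · rw [ptx_some] at hv
    obtain ⟨hx0, hy0, hvy⟩ := v_y_of_neg hme hm h.1 hv
    rw [double_point h hy0]
    refine ⟨some_ne_zero _, ?_⟩
    have hx' := double_x_eq h hy0 (double_point h hy0)
    rw [ptx_some, ptx_some, hx']
    exact (v_xd hme hm h.1 hv).2

/-- the three square identities for a doubled point -/
lemma double_squares (hm : 4 ≤ m) {x y : ℚ} (h : (Wm m).Nonsingular x y) (hy : y ≠ 0)
    {x' y' : ℚ} {h' : (Wm m).Nonsingular x' y'}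
    (hdd : Point.some _ _ h + Point.some _ _ h = Point.some _ _ h') :
    ∃ a b c : ℚ, x' - e1 m = a ^ 2 ∧ x' - e2 m = b ^ 2 ∧ x' - e3 m = c ^ 2 := by
  have hx' := double_x_eq h hy hdd
  have heqc : y ^ 2 = (x - e1 m) * (x - e2 m) * (x - e3 m) := equation_iff_Wm.mp h.1
  have ha2 : (Wm m).a₂ = -(e1 m + e2 m + e3 m) := by
    rw [Wm_a₂]; unfold e1 e2 e3; ring
  have ha4 : (Wm m).a₄ = e1 m * e2 m + e1 m * e3 m + e2 m * e3 m := by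
    rw [Wm_a₄]; unfold e1 e2 e3; ring
  refine ⟨((x - e1 m) ^ 2 - (e2 m - e1 m) * (e3 m - e1 m)) / (2 * y),
    ((x - e2 m) ^ 2 - (e1 m - e2 m) * (e3 m - e2 m)) / (2 * y),
    ((x - e3 m) ^ 2 - (e1 m - e3 m) * (e2 m - e3 m)) / (2 * y), ?_, ?_, ?_⟩
  · have := sq_helper (x := x) (y := y) (ei := e1 m) (ej := e2 m) (ek := e3 m) hy ha2 ha4
      (by linear_combination heqc)
    rw [hx']
    linear_combination this
  · have := sq_helper (x := x) (y := y) (A2 := (Wm m).a₂) (A4 := (Wm m).a₄) (ei := e2 m) (ej := e1 m) (ek := e3 m) hy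
      (by rw [ha2]; ring) (by rw [ha4]; ring) (by linear_combination heqc)
    rw [hx']
    linear_combination this
  · have := sq_helper (x := x) (y := y) (A2 := (Wm m).a₂) (A4 := (Wm m).a₄) (ei := e3 m) (ej := e1 m) (ek := e2 m) hy
      (by rw [ha2]; ring) (by rw [ha4]; ring) (by linear_combination heqc)
    rw [hx']
    linear_combination this

end Points

section Claims

open WeierstrassCurve.Affine.Point

variable {m : ℤ}

lemma add_self_eq_zero_iff {x y : ℚ} (h : (Wm m).Nonsingular x y) :
    Point.some _ _ h + Point.some _ _ h = 0 ↔ y = 0 := by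
  constructor
  · intro h0
    by_contra hy
    rw [double_point h hy] at h0
    exact some_ne_zero _ h0
  · intro hy
    exact add_self_of_Y_eq (by rw [negY_Wm, hy, _root_.neg_zero])

lemma two_torsion_x (hm : 4 ≤ m) {x : ℚ} (heq : (Wm m).Equation x 0) :
    x = e1 m ∨ x = e2 m ∨ x = e3 m := by
  have h := equation_iff_Wm.mp heq
  have h0 : (x - e1 m) * (x - e2 m) * (x - e3 m) = 0 := by linear_combination -h
  rcases mul_eq_zero.mp h0 with h1 | h1
  · rcases mul_eq_zero.mp h1 with h2 | h2
    · exact Or.inl (by linarith [sub_eq_zero.mp h2])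
    · exact Or.inr (Or.inl (sub_eq_zero.mp h2))
  · exact Or.inr (Or.inr (sub_eq_zero.mp h1))

lemma v_nonneg_sub_e {x e : ℚ} (hx : 0 ≤ v x) (he : v e = 0) (hne : x - e ≠ 0) :
    0 ≤ v (x - e) := by
  rcases eq_or_ne x 0 with rfl | hx0
  · rw [zero_sub, v_neg, he]
  · have hmin := padicValRat.min_le_padicValRat_add (p := 2) (q := x) (r := -e)
      (by rwa [← sub_eq_add_neg])
    rw [← sub_eq_add_neg, v_neg, he] at hmin
    omega

/-- the 2-adic contradiction from the two square identities at a 2-integral point -/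
lemma squares_contradiction (hme : Even m) (hm : 4 ≤ m) {xp : ℚ} (hvp : 0 ≤ v xp)
    {a b : ℚ} (ha : xp - e1 m = a ^ 2) (hb : xp - e2 m = b ^ 2) : False := by
  have hba : b ^ 2 - a ^ 2 = e1 m - e2 m := by linear_combination ha - hb
  have he12 : e1 m - e2 m ≠ 0 := sub_ne_zero_of_ne (e1_ne_e2 hm)
  have hv1 : v (e1 m - e2 m) = 1 := v_e1e2 hme hm
  rcases eq_or_ne a 0 with rfl | ha0
  · -- xp = e1, so b² = e1 - e2 with odd valuation
    have hb2 : b ^ 2 = e1 m - e2 m := by linear_combination hba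
    have hb0 : b ≠ 0 := by
      intro h0
      rw [h0] at hb2
      exact he12 (by linear_combination -hb2)
    have heven := v_sq_even hb0
    rw [hb2, hv1] at heven
    rcases heven with ⟨t, ht⟩
    omega
  · rcases eq_or_ne b 0 with rfl | hb0
    · -- a² = e2 - e1 < 0
      have : a ^ 2 = e2 m - e1 m := by linear_combination -hba
      have := e2_sub_e1_neg hm
      nlinarith [sq_nonneg a]
    · have hva : 0 ≤ v (a ^ 2) := by
        rw [← ha]
        exact v_nonneg_sub_e hvp (v_e1 hme) (by rw [ha]; exact pow_ne_zero 2 ha0)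
      have hvb : 0 ≤ v (b ^ 2) := by
        rw [← hb]
        exact v_nonneg_sub_e hvp (v_e2 hme) (by rw [hb]; exact pow_ne_zero 2 hb0)
      have := v_sq_sub_sq ha0 hb0 (by rw [hba]; exact he12) hva hvb
      rw [hba, hv1] at this
      exact this rfl

/-- no point of order four -/
lemma no_order_four (hme : Even m) (hm : 4 ≤ m) (P : (Wm m).Point) :
    addOrderOf P ≠ 4 := by
  intro hP4
  have h4 : (4 : ℕ) • P = 0 := by rw [← hP4]; exact addOrderOf_nsmul_eq_zero P
  have hR2 : P + P ≠ 0 := by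
    intro h0
    have hdvd : addOrderOf P ∣ 2 := addOrderOf_dvd_of_nsmul_eq_zero (by rwa [two_nsmul])
    rw [hP4] at hdvd
    norm_num at hdvd
  have hRR : (P + P) + (P + P) = 0 := by
    have h22 : (2 : ℕ) • ((2 : ℕ) • P) = (4 : ℕ) • P := by
      rw [smul_smul]
      norm_num
    rw [two_nsmul, two_nsmul] at h22
    rw [h22]
    exact h4
  rcases P with _ | @⟨x, y, h⟩
  · rw [← zero_def, addOrderOf_zero] at hP4
    exact absurd hP4 (by norm_num)
  · have hy : y ≠ 0 := by
      intro hy0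
      exact hR2 ((add_self_eq_zero_iff h).mpr hy0)
    have hd := double_point h hy
    set h' := WeierstrassCurve.Affine.nonsingular_add h h (fun hxy => y_ne_negY_Wm hy hxy.right) with hh'
    rw [hd] at hRR hR2
    have hy' : (Wm m).addY x x y ((Wm m).slope x x y y) = 0 :=
      (add_self_eq_zero_iff h').mp hRR
    obtain ⟨a, b, c, ha, hb, hc⟩ := double_squares hm h hy hd
    have heq' : (Wm m).Equation ((Wm m).addX x x ((Wm m).slope x x y y)) 0 := by
      have := h'.1
      rwa [hy'] at this
    rcases two_torsion_x hm heq' with hx' | hx' | hx'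
    · -- x' = e1 : b² = e1 - e2 has odd valuation
      rw [hx'] at ha hb
      exact squares_contradiction hme hm (by rw [v_e1 hme]) ha hb
    · -- x' = e2 : a² = e2 - e1 < 0
      rw [hx'] at ha
      have := e2_sub_e1_neg hm
      nlinarith [sq_nonneg a]
    · -- x' = e3 : a² = e3 - e1 < 0
      rw [hx'] at ha
      have := e3_sub_e1_neg hm
      nlinarith [sq_nonneg a]

/-- no point of odd order bigger than one -/
lemma no_odd_order (hme : Even m) (hm : 4 ≤ m) (P : (Wm m).Point)
    (hfin : IsOfFinAddOrder P) (hodd : Odd (addOrderOf P)) : P = 0 := by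
  by_contra hP
  have hnpos : 0 < addOrderOf P := addOrderOf_pos_iff.mpr hfin
  have hn1 : addOrderOf P ≠ 1 := by
    rw [ne_eq, AddMonoid.addOrderOf_eq_one_iff]
    exact hP
  rcases lt_or_ge (v (ptx P)) 0 with hneg | hpos
  · -- valuation descent
    have hiter : ∀ j : ℕ, 2 ^ j • P ≠ 0 ∧ v (ptx (2 ^ j • P)) = v (ptx P) - 2 * j := by
      intro j
      induction j with
      | zero => refine ⟨by simpa using hP, by simp⟩
      | succ k ih =>
        have h2 : (2 ^ (k + 1) : ℕ) • P = (2 ^ k : ℕ) • P + (2 ^ k : ℕ) • P := by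
          rw [← two_nsmul, smul_smul, pow_succ, mul_comm]
        have hd := double_neg_val hme hm _ ih.1 (by rw [ih.2]; push_cast; linarith)
        refine ⟨by rw [h2]; exact hd.1, ?_⟩
        rw [h2, hd.2, ih.2]
        push_cast
        ring
    have hcop : Nat.Coprime 2 (addOrderOf P) :=
      (Nat.prime_two.coprime_iff_not_dvd).mpr
        (Nat.two_dvd_ne_zero.mpr (Nat.odd_iff.mp hodd))
    have hpow : 2 ^ (addOrderOf P).totient % addOrderOf P = 1 % addOrderOf P :=
      Nat.ModEq.pow_totient hcop
    have hper : (2 ^ (addOrderOf P).totient : ℕ) • P = P := by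
      conv_lhs => rw [← mod_addOrderOf_nsmul]
      rw [hpow, mod_addOrderOf_nsmul, one_nsmul]
    have hv := (hiter (addOrderOf P).totient).2
    rw [hper] at hv
    have ht1 : 1 ≤ (addOrderOf P).totient := Nat.totient_pos.mpr hnpos
    have : ((addOrderOf P).totient : ℤ) ≥ 1 := by exact_mod_cast ht1
    omega
  · -- halving and square identities
    obtain ⟨t, ht⟩ := hodd
    have h2k : 2 * (t + 1) = addOrderOf P + 1 := by omega
    have hSP : (t + 1 : ℕ) • P + (t + 1 : ℕ) • P = P := by
      rw [← two_nsmul, smul_smul, h2k, succ_nsmul, addOrderOf_nsmul_eq_zero, zero_add]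
    generalize hQ : (t + 1 : ℕ) • P = S at hSP
    rcases S with _ | @⟨xs, ys, hs⟩
    · rw [← zero_def, zero_add] at hSP
      exact hP hSP.symm
    · have hys : ys ≠ 0 := by
        intro hy0
        rw [(add_self_eq_zero_iff hs).mpr hy0] at hSP
        exact hP hSP.symm
      rcases P with _ | @⟨xp, yp, hp⟩
      · exact hP rfl
      · obtain ⟨a, b, c, ha, hb, hc⟩ := double_squares hm hs hys hSP
        rw [ptx_some] at hpos
        exact squares_contradiction hme hm hpos ha hb

end Claims

section Final

open WeierstrassCurve.Affine.Point

variable {m : ℤ}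

/-- every torsion point is killed by 2 -/
lemma torsion_two (hme : Even m) (hm : 4 ≤ m) (P : (Wm m).Point)
    (hfin : IsOfFinAddOrder P) : P + P = 0 := by
  have hnpos : 0 < addOrderOf P := addOrderOf_pos_iff.mpr hfin
  set n := addOrderOf P with hn
  set k := n.factorization 2 with hk
  have hqodd : Odd (n / 2 ^ k) := by
    have h := Nat.not_dvd_ordCompl Nat.prime_two (by omega : n ≠ 0)
    exact Nat.odd_iff.mpr (Nat.two_dvd_ne_zero.mp h)
  have hQord : addOrderOf ((2 ^ k : ℕ) • P) = n / 2 ^ k :=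
    addOrderOf_nsmul_of_dvd (pow_ne_zero _ two_ne_zero) (Nat.ordProj_dvd n 2)
  have hQ0 : (2 ^ k : ℕ) • P = 0 :=
    no_odd_order hme hm _ (hfin.nsmul) (by rw [hQord]; exact hqodd)
  have hdvd : n ∣ 2 ^ k := addOrderOf_dvd_of_nsmul_eq_zero hQ0
  have hq1 : n = 2 ^ k := Nat.dvd_antisymm hdvd (Nat.ordProj_dvd n 2)
  have hkle : k ≤ 1 := by
    by_contra hk2
    push_neg at hk2
    have hdd : (2 : ℕ) ^ (k - 2) ∣ n := by
      rw [hq1]; exact pow_dvd_pow 2 (by omega)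
    have h4 : addOrderOf ((2 ^ (k - 2) : ℕ) • P) = 4 := by
      rw [addOrderOf_nsmul_of_dvd (pow_ne_zero _ two_ne_zero) hdd, ← hn, hq1,
        Nat.pow_div (by omega) (by norm_num)]
      have hke : k - (k - 2) = 2 := by omega
      rw [hke]
    exact no_order_four hme hm _ h4
  have hdvd2 : n ∣ 2 := by
    rw [hq1]
    interval_cases k
    · exact one_dvd 2
    · exact dvd_rfl
  have h2 : (2 : ℕ) • P = 0 := addOrderOf_dvd_iff_nsmul_eq_zero.mp hdvd2
  rwa [two_nsmul] at h2

lemma two_torsion_mem (hm : 4 ≤ m) {x : ℚ} (h : (Wm m).Nonsingular x 0) :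
    IsOfFinAddOrder (Point.some _ _ h) := by
  rw [isOfFinAddOrder_iff_nsmul_eq_zero]
  exact ⟨2, two_pos, by rw [two_nsmul]; exact (add_self_eq_zero_iff h).mpr rfl⟩

/-- addition of distinct 2-torsion points -/
lemma add_two_torsion {xa xb xc : ℚ} (ha : (Wm m).Nonsingular xa 0)
    (hb : (Wm m).Nonsingular xb 0) (hc : (Wm m).Nonsingular xc 0) (hne : xa ≠ xb)
    (hx : -(Wm m).a₂ - xa - xb = xc) :
    Point.some _ _ ha + Point.some _ _ hb = Point.some _ _ hc := by
  rw [add_of_X_ne hne]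
  have hL : (Wm m).slope xa xb 0 0 = 0 := by
    rw [WeierstrassCurve.Affine.slope_of_X_ne hne]
    simp
  apply some_congr
  · rw [WeierstrassCurve.Affine.addX, hL, Wm_a₁]
    linear_combination hx
  · rw [WeierstrassCurve.Affine.addY, WeierstrassCurve.Affine.negAddY, hL, negY_Wm]
    ring

lemma nsmul_mod_two {A : Type*} [AddCommMonoid A] {t : A} (h2 : t + t = 0) (x : ℕ) :
    x • t = (x % 2) • t := by
  conv_lhs => rw [← Nat.div_add_mod x 2]
  rw [add_nsmul, mul_comm, ← smul_smul]
  have h2' : (2 : ℕ) • t = 0 := by rw [two_nsmul]; exact h2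
  rw [h2', smul_zero, zero_add]

lemma T1_add_T2 (hm : 4 ≤ m) :
    Point.some _ _ (ns_e1 hm) + Point.some _ _ (ns_e2 hm) = Point.some _ _ (ns_e3 hm) :=
  add_two_torsion _ _ _ (e1_ne_e2 hm)
    (by rw [Wm_a₂]; unfold e1 e2 e3; ring)

/-- the main torsion classification -/
lemma torsion_iso (hme : Even m) (hm : 4 ≤ m) :
    Nonempty (AddCommGroup.torsion (Wm m).Point ≃+ (ZMod 2 × ZMod 2)) := by
  set G := AddCommGroup.torsion (Wm m).Point with hG
  have mem1 : Point.some _ _ (ns_e1 hm) ∈ G := two_torsion_mem hm _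
  have mem2 : Point.some _ _ (ns_e2 hm) ∈ G := two_torsion_mem hm _
  set t1 : G := ⟨Point.some _ _ (ns_e1 hm), mem1⟩ with ht1
  set t2 : G := ⟨Point.some _ _ (ns_e2 hm), mem2⟩ with ht2
  have h2t1 : t1 + t1 = 0 := by
    apply Subtype.ext
    exact (add_self_eq_zero_iff (ns_e1 hm)).mpr rfl
  have h2t2 : t2 + t2 = 0 := by
    apply Subtype.ext
    exact (add_self_eq_zero_iff (ns_e2 hm)).mpr rfl
  set f : ZMod 2 × ZMod 2 → G := fun p => p.1.val • t1 + p.2.val • t2 with hf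
  have hzz : ∀ z : ZMod 2, z = 0 ∨ z = 1 := by decide
  have key : ∀ (a b : ZMod 2) (t : ↥G), t + t = 0 →
      (a + b).val • t = a.val • t + b.val • t := by
    intro a b t ht
    have v0 : ((0 : ZMod 2)).val = 0 := by decide
    have v1 : ((1 : ZMod 2)).val = 1 := by decide
    have h11 : (1 + 1 : ZMod 2) = 0 := by decide
    rcases hzz a with rfl | rfl <;> rcases hzz b with rfl | rfl
    · rw [add_zero, v0, zero_nsmul, add_zero]
    · rw [zero_add, v0, v1, zero_nsmul, zero_add]
    · rw [add_zero, v0, v1, zero_nsmul, add_zero]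
    · rw [h11, v0, v1, zero_nsmul, one_nsmul, ht]
  have hadd : ∀ p q : ZMod 2 × ZMod 2, f (p + q) = f p + f q := by
    intro p q
    simp only [hf, Prod.fst_add, Prod.snd_add]
    rw [key p.1 q.1 t1 h2t1, key p.2 q.2 t2 h2t2]
    abel
  set F : (ZMod 2 × ZMod 2) →+ G := AddMonoidHom.mk' f hadd with hF
  have hz := hzz
  have hval0 : ((0 : ZMod 2)).val = 0 := rfl
  have hval1 : ((1 : ZMod 2)).val = 1 := rfl
  have hf00 : f (0, 0) = 0 := by
    simp only [hf, hval0, zero_nsmul, add_zero]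
  have hf10 : f (1, 0) = t1 := by
    simp only [hf, hval0, hval1, one_nsmul, zero_nsmul, add_zero]
  have hf01 : f (0, 1) = t2 := by
    simp only [hf, hval0, hval1, one_nsmul, zero_nsmul, zero_add]
  have hf11 : f (1, 1) = t1 + t2 := by
    simp only [hf, hval1, one_nsmul]
  have ht1ne : t1 ≠ 0 := by
    intro h0
    exact some_ne_zero (ns_e1 hm) (Subtype.ext_iff.mp h0)
  have ht2ne : t2 ≠ 0 := by
    intro h0
    exact some_ne_zero (ns_e2 hm) (Subtype.ext_iff.mp h0)
  have ht12ne : t1 + t2 ≠ 0 := by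
    intro h0
    have h1 : Point.some _ _ (ns_e1 hm) + Point.some _ _ (ns_e2 hm) = 0 := Subtype.ext_iff.mp h0
    rw [T1_add_T2 hm] at h1
    exact some_ne_zero (ns_e3 hm) h1
  have hinj : Function.Injective F := by
    rw [injective_iff_map_eq_zero]
    intro p hp
    rcases hz p.1 with h1 | h1 <;> rcases hz p.2 with h2 | h2 <;>
      (have hpp : p = (p.1, p.2) := rfl) <;> rw [h1, h2] at hpp <;> subst hpp
    · rfl
    · rw [show F (0, 1) = f (0, 1) from rfl, hf01] at hp
      exact absurd hp ht2ne
    · rw [show F (1, 0) = f (1, 0) from rfl, hf10] at hp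
      exact absurd hp ht1ne
    · rw [show F (1, 1) = f (1, 1) from rfl, hf11] at hp
      exact absurd hp ht12ne
  have hsurj : Function.Surjective F := by
    rintro ⟨P, hP⟩
    have hfin : IsOfFinAddOrder P := hP
    have h2P : P + P = 0 := torsion_two hme hm P hfin
    rcases P with _ | @⟨x, y, h⟩
    · exact ⟨(0, 0), by apply Subtype.ext; rw [show F (0, 0) = f (0, 0) from rfl, hf00]; rfl⟩
    · have hy : y = 0 := (add_self_eq_zero_iff h).mp h2P
      subst hy
      rcases two_torsion_x hm h.1 with hx | hx | hx
      · refine ⟨(1, 0), ?_⟩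
        apply Subtype.ext
        rw [show F (1, 0) = f (1, 0) from rfl, hf10]
        exact some_congr (ns_e1 hm) h hx.symm rfl
      · refine ⟨(0, 1), ?_⟩
        apply Subtype.ext
        rw [show F (0, 1) = f (0, 1) from rfl, hf01]
        exact some_congr (ns_e2 hm) h hx.symm rfl
      · refine ⟨(1, 1), ?_⟩
        apply Subtype.ext
        rw [show F (1, 1) = f (1, 1) from rfl, hf11]
        show Point.some _ _ (ns_e1 hm) + Point.some _ _ (ns_e2 hm) = _
        rw [T1_add_T2 hm]
        exact some_congr (ns_e3 hm) h hx.symm rfl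
  exact ⟨(AddEquiv.ofBijective F ⟨hinj, hsurj⟩).symm⟩

end Final

end WmAux

/-- The torsion subgroup of E_m(ℚ) is ℤ/2ℤ × ℤ/2ℤ. -/
theorem stmt11 (m : ℤ) (hm : 4 ≤ m) (hme : Even m)
    (h1 : Prime (m - 1)) (h2 : Prime (m + 1)) :
    Nonempty (AddCommGroup.torsion (Wm m).Point ≃+ (ZMod 2 × ZMod 2)) :=
  WmAux.torsion_iso hme hm
end
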